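/- Let ρ : F₂ → PSL(2,ℂ) be a non-elementary group homomorphism and suppose there exists a primitive element γ ∈ F₂ such that ρ(γ) is loxodromic or parabolic. Then there exist elements x, y ∈ F₂ such that {x, y} generates F₂ and both ρ(x) and ρ(y) are loxodromic. -/

import Mathlib

/- Common setup: PSL(2,ℂ), its action on ℙ¹(ℂ), loxodromic/parabolic/elliptic elements,
elementary subgroups, surface groups, the pentagon group Γ and the embedding ι. -/

noncomputable section

open Matrix

/-- `SL(2,ℂ)`. -/
abbrev SL2C : Type := Matrix.SpecialLinearGroup (Fin 2) ℂ

instance : TopologicalSpace SL2C := instTopologicalSpaceSubtype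

/-- `PSL(2,ℂ)`, the quotient of `SL(2,ℂ)` by its center `{±I}`. -/
abbrev PSL2C : Type := SL2C ⧸ Subgroup.center SL2C

/-- The quotient map `SL(2,ℂ) → PSL(2,ℂ)`. -/
def projPSL : SL2C →* PSL2C := QuotientGroup.mk' (Subgroup.center SL2C)

/-- The complex projective line `ℙ¹(ℂ)`. -/
abbrev P1 : Type := Projectivization ℂ (Fin 2 → ℂ)

/-- The square of the trace, well defined on `PSL(2,ℂ)`. -/
def trSq (g : PSL2C) : ℂ :=
  (Matrix.trace ((Quotient.out g : SL2C) : Matrix (Fin 2) (Fin 2) ℂ)) ^ 2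

/-- `g` is loxodromic iff `tr² g` is not a real number in `[0,4]`. -/
def IsLoxodromic (g : PSL2C) : Prop := ¬ ∃ r : ℝ, 0 ≤ r ∧ r ≤ 4 ∧ trSq g = (r : ℂ)

/-- `g` is parabolic iff `g ≠ 1` and `tr² g = 4`. -/
def IsParabolic (g : PSL2C) : Prop := g ≠ 1 ∧ trSq g = 4

/-- `g` is elliptic iff `g ≠ 1` and `tr² g` is a real number in `[0,4)`. -/
def IsElliptic (g : PSL2C) : Prop := g ≠ 1 ∧ ∃ r : ℝ, 0 ≤ r ∧ r < 4 ∧ trSq g = (r : ℂ)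

lemma sl2_toLin'_injective (g : SL2C) :
    Function.Injective (Matrix.toLin' (g : Matrix (Fin 2) (Fin 2) ℂ)) := by
  intro v w h
  have h2 : Matrix.toLin' ((g⁻¹ : SL2C) : Matrix (Fin 2) (Fin 2) ℂ)
      (Matrix.toLin' ((g : SL2C) : Matrix (Fin 2) (Fin 2) ℂ) v) =
      Matrix.toLin' ((g⁻¹ : SL2C) : Matrix (Fin 2) (Fin 2) ℂ)
      (Matrix.toLin' ((g : SL2C) : Matrix (Fin 2) (Fin 2) ℂ) w) := by rw [h]
  rwa [← Matrix.toLin'_mul_apply, ← Matrix.toLin'_mul_apply,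
    ← Matrix.SpecialLinearGroup.coe_mul, inv_mul_cancel,
    Matrix.SpecialLinearGroup.coe_one, Matrix.toLin'_one, LinearMap.id_apply,
    LinearMap.id_apply] at h2

/-- The action of `PSL(2,ℂ)` on `ℙ¹(ℂ)` by Möbius transformations (independent of the
choice of representative, since the center acts trivially on lines). -/
def pslAct (g : PSL2C) (x : P1) : P1 :=
  Projectivization.map (Matrix.toLin' ((Quotient.out g : SL2C) : Matrix (Fin 2) (Fin 2) ℂ))
    (sl2_toLin'_injective _) x

/-- A subgroup of `PSL(2,ℂ)` is elementary if it has a nonempty invariant subset of `ℙ¹(ℂ)`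
with at most two elements, or its closure is compact. -/
def IsElementarySubgroup (G : Subgroup PSL2C) : Prop :=
  (∃ S : Set P1, S.Nonempty ∧ S.Finite ∧ S.ncard ≤ 2 ∧ ∀ g ∈ G, pslAct g '' S = S) ∨
    IsCompact (closure (G : Set PSL2C))

/-- A homomorphism to `PSL(2,ℂ)` is non-elementary if its image is non-elementary. -/
def IsNonElem {H : Type*} [Group H] (ρ : H →* PSL2C) : Prop :=
  ¬ IsElementarySubgroup ρ.range

/-- `g` sends a fixed point of `h` to the other one. -/
def SendsFixedToOther (g h : PSL2C) : Prop :=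
  ∃ p q : P1, p ≠ q ∧ pslAct h p = p ∧ pslAct h q = q ∧ (pslAct g p = q ∨ pslAct g q = p)

/-- `g` interchanges the two fixed points of `h`. -/
def InterchangesFixed (g h : PSL2C) : Prop :=
  ∃ p q : P1, p ≠ q ∧ pslAct h p = p ∧ pslAct h q = q ∧ pslAct g p = q ∧ pslAct g q = p

/-- `PSL(2,ℝ)` as a subgroup of `PSL(2,ℂ)`: the image of `SL(2,ℝ)`. -/
def PSL2R : Subgroup PSL2C :=
  (projPSL.comp (Matrix.SpecialLinearGroup.map (n := Fin 2) Complex.ofRealHom)).range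

/-- `γ₁, γ₂` generate a rank-two Schottky group: the induced map from the free group `F₂` is
injective, with discrete image, all of whose nontrivial elements are loxodromic. -/
def GeneratesSchottky (γ₁ γ₂ : PSL2C) : Prop :=
  Function.Injective (FreeGroup.lift ![γ₁, γ₂] : FreeGroup (Fin 2) →* PSL2C) ∧
    DiscreteTopology ((FreeGroup.lift ![γ₁, γ₂] : FreeGroup (Fin 2) →* PSL2C).range) ∧
    ∀ g ∈ (FreeGroup.lift ![γ₁, γ₂] : FreeGroup (Fin 2) →* PSL2C).range, g ≠ 1 → IsLoxodromic g

/-- The commutator `[x,y] = y⁻¹x⁻¹yx` in a free group. -/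
def commF {α : Type*} (x y : FreeGroup α) : FreeGroup α := y⁻¹ * x⁻¹ * y * x

/-- The surface relator `[a_g,b_g]⋯[a₁,b₁]`. -/
def surfaceRel (g : ℕ) : FreeGroup (Fin g × Bool) :=
  (((List.finRange g).reverse).map
    (fun i => commF (FreeGroup.of (i, false)) (FreeGroup.of (i, true)))).prod

/-- The genus-`g` surface group `Γ_g`. -/
abbrev SurfaceGroup (g : ℕ) : Type :=
  PresentedGroup ({surfaceRel g} : Set (FreeGroup (Fin g × Bool)))

/-- The generator `a_{i+1}` of `Γ_g`. -/
def sgA (g : ℕ) (i : Fin g) : SurfaceGroup g := PresentedGroup.of (i, false)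

/-- The generator `b_{i+1}` of `Γ_g`. -/
def sgB (g : ℕ) (i : Fin g) : SurfaceGroup g := PresentedGroup.of (i, true)

/-- The genus-2 surface group `Γ₂`. -/
abbrev Gamma2 : Type := SurfaceGroup 2
def a1 : Gamma2 := sgA 2 0
def b1 : Gamma2 := sgB 2 0
def a2 : Gamma2 := sgA 2 1
def b2 : Gamma2 := sgB 2 1

/-- Relations for the group `Γ = ⟨q₁,…,q₆ ∣ qᵢ² = 1, q₁q₂q₃q₄q₅q₆ = 1⟩`. -/
def pentagonRels : Set (FreeGroup (Fin 6)) :=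
  (Set.range fun i : Fin 6 => FreeGroup.of i * FreeGroup.of i) ∪
    {((List.finRange 6).map FreeGroup.of).prod}

/-- The group `Γ = ⟨q₁,…,q₆ ∣ qᵢ² = 1, q₁q₂q₃q₄q₅q₆ = 1⟩`. -/
abbrev GammaP : Type := PresentedGroup pentagonRels

/-- The generator `q_{i+1}` of `Γ`. -/
def qgen (i : Fin 6) : GammaP := PresentedGroup.of i

lemma qgen_mul_self (i : Fin 6) : qgen i * qgen i = 1 := by
  have hmem : FreeGroup.of i * FreeGroup.of i ∈ pentagonRels :=
    Set.mem_union_left _ ⟨i, rfl⟩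
  have h : (PresentedGroup.mk pentagonRels (FreeGroup.of i * FreeGroup.of i)) = 1 :=
    (QuotientGroup.eq_one_iff _).mpr (Subgroup.subset_normalClosure hmem)
  rw [_root_.map_mul] at h
  exact h

lemma qgen_prod : qgen 0 * (qgen 1 * (qgen 2 * (qgen 3 * (qgen 4 * qgen 5)))) = 1 := by
  have hmem : ((List.finRange 6).map FreeGroup.of).prod ∈ pentagonRels :=
    Set.mem_union_right _ rfl
  have h : (PresentedGroup.mk pentagonRels (((List.finRange 6).map FreeGroup.of).prod)) = 1 :=
    (QuotientGroup.eq_one_iff _).mpr (Subgroup.subset_normalClosure hmem)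
  have h6 : List.finRange 6 = [0, 1, 2, 3, 4, 5] := by decide
  rw [h6] at h
  simp [mul_assoc] at h
  exact h

lemma pent_helper {G : Type*} [Group G] (x : Fin 6 → G) (hx : ∀ i, x i * x i = 1)
    (hp : x 0 * (x 1 * (x 2 * (x 3 * (x 4 * x 5)))) = 1) :
    (x 4 * x 5)⁻¹ * (x 4 * x 3)⁻¹ * (x 4 * x 5) * (x 4 * x 3) *
      ((x 1 * x 2)⁻¹ * (x 1 * x 0)⁻¹ * (x 1 * x 2) * (x 1 * x 0)) = 1 := by
  have hinv : ∀ i, (x i)⁻¹ = x i := fun i => inv_eq_of_mul_eq_one_right (hx i)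
  have hrev : x 5 * (x 4 * (x 3 * (x 2 * (x 1 * x 0)))) = 1 := by
    have h := congrArg (·⁻¹) hp
    simpa [_root_.mul_inv_rev, hinv, mul_assoc] using h
  have key : ∀ (i : Fin 6) (t : G), x i * (x i * t) = t := fun i t => by
    rw [← mul_assoc, hx, one_mul]
  have key2 : ∀ t : G, x 5 * (x 4 * (x 3 * (x 2 * (x 1 * (x 0 * t))))) = t := fun t => by
    calc x 5 * (x 4 * (x 3 * (x 2 * (x 1 * (x 0 * t)))))
        = (x 5 * (x 4 * (x 3 * (x 2 * (x 1 * x 0))))) * t := by simp [mul_assoc]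
      _ = t := by rw [hrev, one_mul]
  simp only [_root_.mul_inv_rev, hinv, mul_assoc]
  simp only [key, key2]
  exact hrev

/-- The images of the generators `a₁, b₁, a₂, b₂` under `ι`. -/
def pentMap : Fin 2 × Bool → GammaP
  | (0, false) => qgen 1 * qgen 0
  | (0, true) => qgen 1 * qgen 2
  | (1, false) => qgen 4 * qgen 3
  | (1, true) => qgen 4 * qgen 5

lemma surfaceRel_two :
    surfaceRel 2 = commF (FreeGroup.of ((1 : Fin 2), false)) (FreeGroup.of ((1 : Fin 2), true)) *
      commF (FreeGroup.of ((0 : Fin 2), false)) (FreeGroup.of ((0 : Fin 2), true)) := by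
  have h : List.finRange 2 = [0, 1] := by decide
  simp [surfaceRel, h]

/-- The embedding `ι : Γ₂ → Γ`, `a₁ ↦ q₂q₁`, `b₁ ↦ q₂q₃`, `a₂ ↦ q₅q₄`, `b₂ ↦ q₅q₆`. -/
def iota : Gamma2 →* GammaP :=
  PresentedGroup.toGroup (f := pentMap) (by
    intro r hr
    rw [Set.mem_singleton_iff] at hr
    subst hr
    rw [surfaceRel_two]
    simp only [commF, _root_.map_mul, _root_.map_inv, FreeGroup.lift_apply_of]
    have h01 : pentMap ((0 : Fin 2), false) = qgen 1 * qgen 0 := rfl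
    have h02 : pentMap ((0 : Fin 2), true) = qgen 1 * qgen 2 := rfl
    have h11 : pentMap ((1 : Fin 2), false) = qgen 4 * qgen 3 := rfl
    have h12 : pentMap ((1 : Fin 2), true) = qgen 4 * qgen 5 := rfl
    rw [h01, h02, h11, h12]
    exact pent_helper (fun i => qgen i) qgen_mul_self qgen_prod)

/-- A pentagon representation: a non-elementary `ρ : Γ₂ → PSL(2,ℂ)` extending to `Γ` with
exactly one `qᵢ` killed. -/
def IsPentagonRep (ρ : Gamma2 →* PSL2C) : Prop :=
  IsNonElem ρ ∧ ∃ ρ' : GammaP →* PSL2C, ρ'.comp iota = ρ ∧ ∃! i : Fin 6, ρ' (qgen i) = 1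

/-- A primitive element of the free group `F₂`: part of a free basis. -/
def IsPrimitiveF2 (γ : FreeGroup (Fin 2)) : Prop :=
  ∃ φ : MulAut (FreeGroup (Fin 2)), φ (FreeGroup.of 0) = γ

/-- `pp` and `pm` are the attracting resp. repelling fixed points of `α`: for a representative
`A ∈ SL(2,ℂ)` with eigenvalues `l, l⁻¹`, `|l| > 1`, they are the corresponding eigenlines. -/
def IsAttrRep (α : PSL2C) (pp pm : P1) : Prop :=
  ∃ A : SL2C, projPSL A = α ∧ ∃ l : ℂ, 1 < ‖l‖ ∧
    ∃ (v w : Fin 2 → ℂ) (hv : v ≠ 0) (hw : w ≠ 0),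
      (A : Matrix (Fin 2) (Fin 2) ℂ) *ᵥ v = l • v ∧
      (A : Matrix (Fin 2) (Fin 2) ℂ) *ᵥ w = l⁻¹ • w ∧
      pp = Projectivization.mk ℂ v hv ∧ pm = Projectivization.mk ℂ w hw

/-! ### Auxiliary lemmas for statement11 -/

section Statement11Aux

open Matrix

lemma aux_projPSL_surj : Function.Surjective projPSL := QuotientGroup.mk'_surjective _

lemma aux_projPSL_out (g : PSL2C) : projPSL (Quotient.out g) = g := Quotient.out_eq g

lemma aux_center_scalar {z : SL2C} (hz : z ∈ Subgroup.center SL2C) :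
    ∃ ζ : ℂ, ζ ^ 2 = 1 ∧ (z : Matrix (Fin 2) (Fin 2) ℂ) = ζ • (1 : Matrix (Fin 2) (Fin 2) ℂ) := by
  obtain ⟨r, hr, hscal⟩ := Matrix.SpecialLinearGroup.mem_center_iff.mp hz
  refine ⟨r, by simpa using hr, ?_⟩
  rw [← hscal, Matrix.scalar_apply, Matrix.smul_one_eq_diagonal]

lemma aux_out_eq_mul_center (M : SL2C) :
    ∃ z ∈ Subgroup.center SL2C, Quotient.out (projPSL M) = M * z := by
  have h : projPSL M = projPSL (Quotient.out (projPSL M)) := (aux_projPSL_out _).symm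
  obtain ⟨z, hz, hMz⟩ := (QuotientGroup.mk'_eq_mk' (Subgroup.center SL2C)).mp h
  exact ⟨z, hz, hMz.symm⟩

lemma aux_trSq_projPSL (M : SL2C) :
    trSq (projPSL M) = (Matrix.trace (M : Matrix (Fin 2) (Fin 2) ℂ)) ^ 2 := by
  obtain ⟨z, hz, hout⟩ := aux_out_eq_mul_center M
  obtain ⟨ζ, hζ, hzval⟩ := aux_center_scalar hz
  have hc : ((Quotient.out (projPSL M) : SL2C) : Matrix (Fin 2) (Fin 2) ℂ)
      = ζ • (M : Matrix (Fin 2) (Fin 2) ℂ) := by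
    rw [hout, Matrix.SpecialLinearGroup.coe_mul, hzval]
    simp [Matrix.mul_smul]
  rw [trSq, hc, Matrix.trace_smul, smul_eq_mul, mul_pow, hζ, one_mul]

lemma aux_mulVec_ne_zero (M : SL2C) {v : Fin 2 → ℂ} (hv : v ≠ 0) :
    (M : Matrix (Fin 2) (Fin 2) ℂ) *ᵥ v ≠ 0 := by
  intro hzero
  apply hv
  apply sl2_toLin'_injective M
  rw [Matrix.toLin'_apply, Matrix.toLin'_apply, hzero, Matrix.mulVec_zero]

lemma aux_pslAct_projPSL (M : SL2C) (v : Fin 2 → ℂ) (hv : v ≠ 0) :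
    pslAct (projPSL M) (Projectivization.mk ℂ v hv)
      = Projectivization.mk ℂ ((M : Matrix (Fin 2) (Fin 2) ℂ) *ᵥ v) (aux_mulVec_ne_zero M hv) := by
  obtain ⟨z, hz, hout⟩ := aux_out_eq_mul_center M
  obtain ⟨ζ, hζ, hzval⟩ := aux_center_scalar hz
  have hζ0 : ζ ≠ 0 := by
    intro hcon; rw [hcon] at hζ; simp at hζ
  have hcoe : ((Quotient.out (projPSL M) : SL2C) : Matrix (Fin 2) (Fin 2) ℂ)
      = ζ • (M : Matrix (Fin 2) (Fin 2) ℂ) := by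
    rw [hout, Matrix.SpecialLinearGroup.coe_mul, hzval]
    simp [Matrix.mul_smul]
  rw [pslAct, Projectivization.map_mk, Projectivization.mk_eq_mk_iff']
  refine ⟨ζ, ?_⟩
  rw [Matrix.toLin'_apply, hcoe, Matrix.smul_mulVec]

lemma aux_pslAct_one (x : P1) : pslAct 1 x = x := by
  induction x using Projectivization.ind with
  | h v hv =>
    have h1 : pslAct (projPSL 1) (Projectivization.mk ℂ v hv)
        = Projectivization.mk ℂ _ (aux_mulVec_ne_zero 1 hv) := aux_pslAct_projPSL 1 v hv
    rw [_root_.map_one] at h1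
    rw [h1]
    congr 1
    simp

lemma aux_pslAct_mul (g h : PSL2C) (x : P1) : pslAct (g * h) x = pslAct g (pslAct h x) := by
  induction x using Projectivization.ind with
  | h v hv =>
    obtain ⟨M, rfl⟩ : ∃ M, projPSL M = g := aux_projPSL_surj g
    obtain ⟨N, rfl⟩ : ∃ N, projPSL N = h := aux_projPSL_surj h
    rw [← _root_.map_mul, aux_pslAct_projPSL, aux_pslAct_projPSL, aux_pslAct_projPSL]
    congr 1
    rw [Matrix.SpecialLinearGroup.coe_mul, Matrix.mulVec_mulVec]

lemma aux_lox_of_abs {g : PSL2C} (habs : 4 < ‖trSq g‖) : IsLoxodromic g := by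
  rintro ⟨r, hr0, hr4, heq⟩
  rw [heq, Complex.norm_real, Real.norm_eq_abs, abs_of_nonneg hr0] at habs
  linarith

lemma aux_abs_sq {t : ℂ} (ht : 2 < ‖t‖) : 4 < ‖t ^ 2‖ := by
  rw [norm_pow]
  nlinarith [norm_nonneg t]

lemma aux_abs_lower (u z : ℂ) : ‖u‖ - ‖z‖ ≤ ‖u + z‖ := by
  have h := norm_sub_norm_le u (-z)
  simpa using h

/-- The stabilizer of a set of points of `P1`, as a subgroup of `PSL2C`. -/
def actStab (S : Set P1) : Subgroup PSL2C where
  carrier := {g | pslAct g '' S = S}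
  one_mem' := by
    have h : pslAct (1 : PSL2C) = id := funext aux_pslAct_one
    simp [Set.mem_setOf_eq, h]
  mul_mem' := by
    intro a b ha hb
    have h : pslAct (a * b) = pslAct a ∘ pslAct b := funext (aux_pslAct_mul a b)
    simp only [Set.mem_setOf_eq] at *
    rw [h, Set.image_comp, hb, ha]
  inv_mem' := by
    intro a ha
    simp only [Set.mem_setOf_eq] at *
    have h1 : pslAct a⁻¹ '' (pslAct a '' S) = S := by
      rw [← Set.image_comp]
      have h2 : pslAct a⁻¹ ∘ pslAct a = id := by
        funext x
        simp only [Function.comp_apply, id_eq]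
        rw [← aux_pslAct_mul, inv_mul_cancel, aux_pslAct_one]
      rw [h2, Set.image_id]
    rw [ha] at h1
    exact h1

lemma aux_closure_F2 :
    Subgroup.closure ({FreeGroup.of 0, FreeGroup.of 1} : Set (FreeGroup (Fin 2))) = ⊤ := by
  rw [eq_top_iff]
  intro x _
  refine FreeGroup.induction_on x (one_mem _) (fun i => ?_)
    (fun i hi => inv_mem hi) (fun a b ha hb => mul_mem ha hb)
  fin_cases i
  · exact Subgroup.subset_closure (Set.mem_insert _ _)
  · exact Subgroup.subset_closure (Set.mem_insert_of_mem _ rfl)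

lemma aux_pair_top {x y : FreeGroup (Fin 2)}
    (h0 : FreeGroup.of 0 ∈ Subgroup.closure ({x, y} : Set (FreeGroup (Fin 2))))
    (h1 : FreeGroup.of 1 ∈ Subgroup.closure ({x, y} : Set (FreeGroup (Fin 2)))) :
    Subgroup.closure ({x, y} : Set (FreeGroup (Fin 2))) = ⊤ := by
  rw [eq_top_iff, ← aux_closure_F2]
  apply (Subgroup.closure_le _).mpr
  rintro z (rfl | rfl) <;> assumption

lemma aux_elementary_of_invariant (ρ : FreeGroup (Fin 2) →* PSL2C) (S : Set P1)
    (hne : S.Nonempty) (hfin : S.Finite) (hcard : S.ncard ≤ 2)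
    (hinv : ∀ i : Fin 2, pslAct (ρ (FreeGroup.of i)) '' S = S) :
    IsElementarySubgroup ρ.range := by
  left
  refine ⟨S, hne, hfin, hcard, ?_⟩
  rintro g ⟨α, rfl⟩
  have hle : (⊤ : Subgroup (FreeGroup (Fin 2))) ≤ (actStab S).comap ρ := by
    rw [← aux_closure_F2]
    apply (Subgroup.closure_le _).mpr
    rintro z (rfl | rfl)
    · exact hinv 0
    · exact hinv 1
  exact hle trivial

lemma aux_gen_pair_shift (n : ℕ) :
    Subgroup.closure ({FreeGroup.of 0, (FreeGroup.of 0) ^ n * FreeGroup.of 1} :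
      Set (FreeGroup (Fin 2))) = ⊤ := by
  apply aux_pair_top
  · exact Subgroup.subset_closure (Set.mem_insert _ _)
  · have h0 : FreeGroup.of 0 ∈ Subgroup.closure ({FreeGroup.of 0,
        (FreeGroup.of 0) ^ n * FreeGroup.of 1} : Set (FreeGroup (Fin 2))) :=
      Subgroup.subset_closure (Set.mem_insert _ _)
    have hy : (FreeGroup.of 0) ^ n * FreeGroup.of 1 ∈ Subgroup.closure ({FreeGroup.of 0,
        (FreeGroup.of 0) ^ n * FreeGroup.of 1} : Set (FreeGroup (Fin 2))) :=
      Subgroup.subset_closure (Set.mem_insert_of_mem _ rfl)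
    have e : ((FreeGroup.of 0)⁻¹) ^ n * ((FreeGroup.of 0) ^ n * FreeGroup.of (1 : Fin 2))
        = FreeGroup.of 1 := by group
    have hm := mul_mem (pow_mem (inv_mem h0) n) hy
    rwa [e] at hm

lemma aux_gen_pair_shift_neg (n : ℕ) :
    Subgroup.closure ({FreeGroup.of 0, ((FreeGroup.of 0)⁻¹) ^ n * FreeGroup.of 1} :
      Set (FreeGroup (Fin 2))) = ⊤ := by
  apply aux_pair_top
  · exact Subgroup.subset_closure (Set.mem_insert _ _)
  · have h0 : FreeGroup.of 0 ∈ Subgroup.closure ({FreeGroup.of 0,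
        ((FreeGroup.of 0)⁻¹) ^ n * FreeGroup.of 1} : Set (FreeGroup (Fin 2))) :=
      Subgroup.subset_closure (Set.mem_insert _ _)
    have hy : ((FreeGroup.of 0)⁻¹) ^ n * FreeGroup.of 1 ∈ Subgroup.closure ({FreeGroup.of 0,
        ((FreeGroup.of 0)⁻¹) ^ n * FreeGroup.of 1} : Set (FreeGroup (Fin 2))) :=
      Subgroup.subset_closure (Set.mem_insert_of_mem _ rfl)
    have e : (FreeGroup.of 0) ^ n * (((FreeGroup.of 0)⁻¹) ^ n * FreeGroup.of (1 : Fin 2))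
        = FreeGroup.of 1 := by group
    have hm := mul_mem (pow_mem h0 n) hy
    rwa [e] at hm

lemma aux_gen_pair_succ (n : ℕ) :
    Subgroup.closure ({(FreeGroup.of 0) ^ (n + 1) * FreeGroup.of 1,
      (FreeGroup.of 0) ^ n * FreeGroup.of 1} : Set (FreeGroup (Fin 2))) = ⊤ := by
  have hx : (FreeGroup.of 0) ^ (n + 1) * FreeGroup.of 1 ∈ Subgroup.closure
      ({(FreeGroup.of 0) ^ (n + 1) * FreeGroup.of 1, (FreeGroup.of 0) ^ n * FreeGroup.of 1} :
        Set (FreeGroup (Fin 2))) := Subgroup.subset_closure (Set.mem_insert _ _)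
  have hy : (FreeGroup.of 0) ^ n * FreeGroup.of 1 ∈ Subgroup.closure
      ({(FreeGroup.of 0) ^ (n + 1) * FreeGroup.of 1, (FreeGroup.of 0) ^ n * FreeGroup.of 1} :
        Set (FreeGroup (Fin 2))) := Subgroup.subset_closure (Set.mem_insert_of_mem _ rfl)
  have e : ((FreeGroup.of 0) ^ (n + 1) * FreeGroup.of 1) *
      ((FreeGroup.of 0) ^ n * FreeGroup.of (1 : Fin 2))⁻¹ = FreeGroup.of 0 := by group
  have h0 : FreeGroup.of 0 ∈ Subgroup.closure
      ({(FreeGroup.of 0) ^ (n + 1) * FreeGroup.of 1, (FreeGroup.of 0) ^ n * FreeGroup.of 1} :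
        Set (FreeGroup (Fin 2))) := by
    have hm := mul_mem hx (inv_mem hy)
    rwa [e] at hm
  apply aux_pair_top h0
  have e2 : ((FreeGroup.of 0)⁻¹) ^ n * ((FreeGroup.of 0) ^ n * FreeGroup.of (1 : Fin 2))
      = FreeGroup.of 1 := by group
  have hm := mul_mem (pow_mem (inv_mem h0) n) hy
  rwa [e2] at hm

/-- matrix with columns `v`, `w` -/
def colMat (v w : Fin 2 → ℂ) : Matrix (Fin 2) (Fin 2) ℂ := !![v 0, w 0; v 1, w 1]

lemma colMat_mulVec (v w x : Fin 2 → ℂ) : colMat v w *ᵥ x = x 0 • v + x 1 • w := by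
  funext i
  fin_cases i <;>
    (simp [colMat, Matrix.mulVec, dotProduct, Fin.sum_univ_two, mul_comm]; try ring)

lemma mul_colMat (M : Matrix (Fin 2) (Fin 2) ℂ) (v w : Fin 2 → ℂ) :
    M * colMat v w = colMat (M *ᵥ v) (M *ᵥ w) := by
  ext i j
  fin_cases i <;> fin_cases j <;>
    simp [colMat, Matrix.mul_apply, Matrix.mulVec, dotProduct, Fin.sum_univ_two]

lemma colMat_mul_diag (v w : Fin 2 → ℂ) (a b : ℂ) :
    colMat v w * Matrix.diagonal ![a, b] = colMat (a • v) (b • w) := by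
  ext i j
  fin_cases i <;> fin_cases j <;>
    simp [colMat, Matrix.mul_apply, Fin.sum_univ_two, mul_comm]

lemma colMat_mul_J (v w : Fin 2 → ℂ) :
    colMat v w * !![1, 1; 0, 1] = colMat v (v + w) := by
  ext i j
  fin_cases i <;> fin_cases j <;>
    simp [colMat, Matrix.mul_apply, Fin.sum_univ_two]

lemma colMat_det_ne_zero {v w : Fin 2 → ℂ}
    (h : ∀ x : Fin 2 → ℂ, x 0 • v + x 1 • w = 0 → x = 0) :
    IsUnit (colMat v w).det := by
  rw [isUnit_iff_ne_zero]
  intro hdet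
  obtain ⟨x, hx0, hx⟩ := (Matrix.exists_mulVec_eq_zero_iff).mpr hdet
  exact hx0 (h x (by rwa [colMat_mulVec] at hx))

lemma det_sub_smul_one (M : Matrix (Fin 2) (Fin 2) ℂ) (l : ℂ) :
    (M - l • 1).det = M.det - l * M.trace + l ^ 2 := by
  rw [Matrix.det_fin_two, Matrix.det_fin_two, Matrix.trace_fin_two]
  simp [Matrix.sub_apply, Matrix.smul_apply, Matrix.one_apply]
  ring

lemma exists_eigvec (M : Matrix (Fin 2) (Fin 2) ℂ) (l : ℂ)
    (h : (M - l • 1).det = 0) : ∃ v : Fin 2 → ℂ, v ≠ 0 ∧ M *ᵥ v = l • v := by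
  obtain ⟨v, hv0, hv⟩ := (Matrix.exists_mulVec_eq_zero_iff).mpr h
  refine ⟨v, hv0, ?_⟩
  rw [Matrix.sub_mulVec, sub_eq_zero] at hv
  rw [hv, Matrix.smul_mulVec, Matrix.one_mulVec]

lemma diag_pow (a b : ℂ) (n : ℕ) :
    (Matrix.diagonal ![a, b]) ^ n = Matrix.diagonal ![a ^ n, b ^ n] := by
  ext i j
  rw [Matrix.diagonal_pow]
  fin_cases i <;> fin_cases j <;> simp [Pi.pow_apply]

lemma J_pow (n : ℕ) : (!![1, 1; 0, 1] : Matrix (Fin 2) (Fin 2) ℂ) ^ n = !![1, (n : ℂ); 0, 1] := by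
  induction n with
  | zero => simp; ext i j; fin_cases i <;> fin_cases j <;> simp
  | succ n ih =>
    rw [pow_succ, ih]
    ext i j
    fin_cases i <;> fin_cases j <;>
      (simp [Matrix.mul_apply, Fin.sum_univ_two]; try ring)

lemma trace_diag_mul (a b : ℂ) (C : Matrix (Fin 2) (Fin 2) ℂ) :
    (Matrix.diagonal ![a, b] * C).trace = a * C 0 0 + b * C 1 1 := by
  rw [Matrix.trace_fin_two]
  simp [Matrix.diagonal_mul]

lemma trace_J_mul (n : ℕ) (C : Matrix (Fin 2) (Fin 2) ℂ) :
    ((!![1, (n : ℂ); 0, 1]) * C).trace = C 0 0 + n * C 1 0 + C 1 1 := by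
  rw [Matrix.trace_fin_two]
  simp [Matrix.mul_apply, Fin.sum_univ_two]

lemma conj_pow_mat (P D : Matrix (Fin 2) (Fin 2) ℂ) (hP : IsUnit P.det) (n : ℕ) :
    (P * D * P⁻¹) ^ n = P * D ^ n * P⁻¹ := by
  induction n with
  | zero => simp [Matrix.mul_nonsing_inv P hP]
  | succ n ih =>
    rw [pow_succ, ih, pow_succ]
    calc P * D ^ n * P⁻¹ * (P * D * P⁻¹) = P * D ^ n * (P⁻¹ * P) * D * P⁻¹ := by
          noncomm_ring
      _ = P * (D ^ n * D) * P⁻¹ := by rw [Matrix.nonsing_inv_mul P hP]; noncomm_ring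

lemma trace_conj_mul (P X N : Matrix (Fin 2) (Fin 2) ℂ) :
    (P * X * P⁻¹ * N).trace = (X * (P⁻¹ * N * P)).trace := by
  have h1 : P * X * P⁻¹ * N = P * (X * (P⁻¹ * N)) := by noncomm_ring
  rw [h1, Matrix.trace_mul_comm]
  noncomm_ring

lemma detC_eq_one (P N : Matrix (Fin 2) (Fin 2) ℂ) (hP : IsUnit P.det) (hN : N.det = 1) :
    (P⁻¹ * N * P).det = 1 := by
  have h : (P⁻¹).det * P.det = 1 := by
    rw [← Matrix.det_mul, Matrix.nonsing_inv_mul P hP, Matrix.det_one]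
  rw [Matrix.det_mul, Matrix.det_mul, hN, mul_one]
  exact h

lemma aux_trace_formula (K N P D : Matrix (Fin 2) (Fin 2) ℂ) (hP : IsUnit P.det)
    (hK : K = P * D * P⁻¹) (n : ℕ) :
    (K ^ n * N).trace = (D ^ n * (P⁻¹ * N * P)).trace := by
  rw [hK, conj_pow_mat P D hP, trace_conj_mul]

end Statement11Aux

section Statement11Main

open Matrix

lemma aux_case_lox (ρ : FreeGroup (Fin 2) →* PSL2C) (h : IsNonElem ρ)
    (hA : IsLoxodromic (ρ (FreeGroup.of 0))) :
    ∃ x y : FreeGroup (Fin 2), Subgroup.closure {x, y} = (⊤ : Subgroup (FreeGroup (Fin 2))) ∧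
      IsLoxodromic (ρ x) ∧ IsLoxodromic (ρ y) := by
  classical
  obtain ⟨M, hM⟩ := aux_projPSL_surj (ρ (FreeGroup.of 0))
  obtain ⟨N, hN⟩ := aux_projPSL_surj (ρ (FreeGroup.of 1))
  set τ : ℂ := Matrix.trace (M : Matrix (Fin 2) (Fin 2) ℂ) with hτ
  have htrSq : trSq (ρ (FreeGroup.of 0)) = τ ^ 2 := by rw [← hM, aux_trSq_projPSL]
  obtain ⟨s, hs⟩ : ∃ s : ℂ, s ^ 2 = τ ^ 2 - 4 := IsAlgClosed.exists_pow_nat_eq _ (by norm_num)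
  set l0 : ℂ := (τ + s) / 2 with hl0
  have hroot : l0 * ((τ - s) / 2) = 1 := by
    rw [hl0]; linear_combination (-(1 : ℂ)/4) * hs
  have hl0ne : l0 ≠ 0 := left_ne_zero_of_mul_eq_one hroot
  have hinv : l0⁻¹ = (τ - s) / 2 := inv_eq_of_mul_eq_one_right hroot
  have hmul0 : l0 * l0⁻¹ = 1 := mul_inv_cancel₀ hl0ne
  have hsum : l0 + l0⁻¹ = τ := by rw [hinv, hl0]; ring
  have hd1 : ((M : Matrix (Fin 2) (Fin 2) ℂ) - l0 • 1).det = 0 := by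
    rw [det_sub_smul_one, M.prop, ← hτ]
    linear_combination l0 * hsum - hmul0
  have hd2 : ((M : Matrix (Fin 2) (Fin 2) ℂ) - l0⁻¹ • 1).det = 0 := by
    rw [det_sub_smul_one, M.prop, ← hτ]
    linear_combination l0⁻¹ * hsum - hmul0
  obtain ⟨v0, hv00, hv0⟩ := exists_eigvec _ _ hd1
  obtain ⟨w0, hw00, hw0⟩ := exists_eigvec _ _ hd2
  have habs1 : ‖l0‖ ≠ 1 := by
    intro h1
    apply hA
    have hmc : l0 * (starRingEnd ℂ) l0 = 1 := by
      rw [Complex.mul_conj, Complex.normSq_eq_norm_sq, h1]; norm_num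
    have hconj : l0⁻¹ = (starRingEnd ℂ) l0 := inv_eq_of_mul_eq_one_right hmc
    have hτre : τ = ((2 * l0.re : ℝ) : ℂ) := by
      rw [← hsum, hconj, Complex.add_conj]
    refine ⟨(2 * l0.re) ^ 2, by positivity, ?_, ?_⟩
    · nlinarith [Complex.abs_re_le_norm l0, abs_nonneg l0.re, sq_abs l0.re, neg_abs_le l0.re]
    · rw [htrSq, hτre]; push_cast; ring
  obtain ⟨l, hlgt, v, hv0ne, hv, w, hw0ne, hw⟩ :
      ∃ l : ℂ, 1 < ‖l‖ ∧ ∃ v : Fin 2 → ℂ, v ≠ 0 ∧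
        (M : Matrix (Fin 2) (Fin 2) ℂ) *ᵥ v = l • v ∧ ∃ w : Fin 2 → ℂ, w ≠ 0 ∧
        (M : Matrix (Fin 2) (Fin 2) ℂ) *ᵥ w = l⁻¹ • w := by
    rcases lt_or_gt_of_ne habs1 with hlt | hgt
    · refine ⟨l0⁻¹, ?_, w0, hw00, hw0, v0, hv00, by rwa [inv_inv]⟩
      rw [norm_inv]
      exact (one_lt_inv₀ (norm_pos_iff.mpr hl0ne)).mpr hlt
    · exact ⟨l0, hgt, v0, hv00, hv0, w0, hw00, hw0⟩
  have hlpos : (0 : ℝ) < ‖l‖ := lt_trans one_pos hlgt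
  have hlne : l ≠ 0 := by
    intro hcon; rw [hcon] at hlpos; simp at hlpos
  have hl2 : l ^ 2 ≠ 1 := by
    intro hcon
    have habs : ‖l‖ ^ 2 = 1 := by
      rw [← norm_pow, hcon, norm_one]
    nlinarith
  have hlml : l - l⁻¹ ≠ 0 := by
    intro hcon
    rw [sub_eq_zero] at hcon
    apply hl2
    rw [sq]
    nth_rewrite 2 [hcon]
    exact mul_inv_cancel₀ hlne
  -- linear independence
  have hind : ∀ x : Fin 2 → ℂ, x 0 • v + x 1 • w = 0 → x = 0 := by
    intro x hx
    have h1 : (x 0 * l) • v + (x 1 * l⁻¹) • w = 0 := by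
      have h2 := congrArg (fun z => (M : Matrix (Fin 2) (Fin 2) ℂ) *ᵥ z) hx
      simp only [Matrix.mulVec_add, Matrix.mulVec_smul, hv, hw, Matrix.mulVec_zero,
        smul_smul] at h2
      simpa [mul_comm] using h2
    have h3 : (x 1 * (l - l⁻¹)) • w = 0 := by
      have hc : (x 1 * (l - l⁻¹)) • w
          = l • (x 0 • v + x 1 • w) - ((x 0 * l) • v + (x 1 * l⁻¹) • w) := by
        module
      rw [hx, h1, smul_zero, sub_zero] at hc
      exact hc
    have hx1 : x 1 = 0 := by
      rcases smul_eq_zero.mp h3 with hc | hc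
      · rcases mul_eq_zero.mp hc with hc' | hc'
        · exact hc'
        · exact absurd hc' hlml
      · exact absurd hc hw0ne
    have hx0 : x 0 = 0 := by
      rw [hx1, zero_smul, add_zero] at hx
      rcases smul_eq_zero.mp hx with hc | hc
      · exact hc
      · exact absurd hc hv0ne
    funext i
    fin_cases i
    · simpa using hx0
    · simpa using hx1
  set P : Matrix (Fin 2) (Fin 2) ℂ := colMat v w with hPdef
  have hP : IsUnit P.det := colMat_det_ne_zero hind
  set D : Matrix (Fin 2) (Fin 2) ℂ := Matrix.diagonal ![l, l⁻¹] with hDdef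
  have hMP : (M : Matrix (Fin 2) (Fin 2) ℂ) = P * D * P⁻¹ := by
    have h1 : (M : Matrix (Fin 2) (Fin 2) ℂ) * P = P * D := by
      rw [hPdef, mul_colMat, hv, hw, hDdef, colMat_mul_diag]
    calc (M : Matrix (Fin 2) (Fin 2) ℂ)
        = (M : Matrix (Fin 2) (Fin 2) ℂ) * P * P⁻¹ := by
          rw [Matrix.mul_assoc, Matrix.mul_nonsing_inv P hP, Matrix.mul_one]
      _ = P * D * P⁻¹ := by rw [h1]
  set C : Matrix (Fin 2) (Fin 2) ℂ := P⁻¹ * (N : Matrix (Fin 2) (Fin 2) ℂ) * P with hCdef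
  -- trace of words a^k b
  have htrw : ∀ k : ℕ, trSq (ρ ((FreeGroup.of 0) ^ k * FreeGroup.of 1))
      = (l ^ k * C 0 0 + (l⁻¹) ^ k * C 1 1) ^ 2 := by
    intro k
    have h1 : ρ ((FreeGroup.of 0) ^ k * FreeGroup.of 1) = projPSL (M ^ k * N) := by
      rw [_root_.map_mul, _root_.map_pow, ← hM, ← hN, ← _root_.map_pow projPSL,
        ← _root_.map_mul projPSL]
    rw [h1, aux_trSq_projPSL, Matrix.SpecialLinearGroup.coe_mul,
      Matrix.SpecialLinearGroup.coe_pow,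
      aux_trace_formula _ _ P D hP hMP, hDdef, diag_pow, trace_diag_mul, ← hCdef]
  by_cases ha : C 0 0 ≠ 0
  · -- growth case : use a, a^n b
    have hapos : 0 < ‖C 0 0‖ := norm_pos_iff.mpr ha
    obtain ⟨n, hn⟩ := pow_unbounded_of_one_lt
      ((2 + ‖C 1 1‖) / ‖C 0 0‖) hlgt
    have hbig : 2 < ‖l ^ n * C 0 0 + (l⁻¹) ^ n * C 1 1‖ := by
      have e1 : ‖l ^ n * C 0 0‖ = ‖l‖ ^ n * ‖C 0 0‖ := by
        rw [norm_mul, norm_pow]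
      have e2 : ‖(l⁻¹) ^ n * C 1 1‖ ≤ ‖C 1 1‖ := by
        rw [norm_mul, norm_pow, norm_inv]
        have hle1 : ‖l‖⁻¹ ≤ 1 := by
          rw [inv_le_one_iff₀]
          right; exact le_of_lt hlgt
        calc (‖l‖⁻¹) ^ n * ‖C 1 1‖
            ≤ 1 * ‖C 1 1‖ := by
              apply mul_le_mul_of_nonneg_right _ (norm_nonneg _)
              exact pow_le_one₀ (by positivity) hle1
          _ = ‖C 1 1‖ := one_mul _
      have e3 : 2 + ‖C 1 1‖ < ‖l‖ ^ n * ‖C 0 0‖ := by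
        rw [div_lt_iff₀ hapos] at hn
        linarith
      linarith [aux_abs_lower (l ^ n * C 0 0) ((l⁻¹) ^ n * C 1 1)]
    refine ⟨FreeGroup.of 0, (FreeGroup.of 0) ^ n * FreeGroup.of 1,
      aux_gen_pair_shift n, hA, ?_⟩
    apply aux_lox_of_abs
    rw [htrw]
    exact aux_abs_sq hbig
  · push_neg at ha
    by_cases hd : C 1 1 ≠ 0
    · -- use a, a⁻ⁿ b
      have hdpos : 0 < ‖C 1 1‖ := norm_pos_iff.mpr hd
      -- inverse matrix conjugation
      set D' : Matrix (Fin 2) (Fin 2) ℂ := Matrix.diagonal ![l⁻¹, l] with hD'def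
      have hDD' : D * D' = 1 := by
        rw [hDdef, hD'def, Matrix.diagonal_mul_diagonal]
        ext i j
        fin_cases i <;> fin_cases j <;>
          simp [mul_inv_cancel₀ hlne, inv_mul_cancel₀ hlne, Matrix.one_apply]
      have hid : (M : Matrix (Fin 2) (Fin 2) ℂ) * (P * D' * P⁻¹) = 1 := by
        rw [hMP]
        calc P * D * P⁻¹ * (P * D' * P⁻¹) = P * (D * (P⁻¹ * P) * D') * P⁻¹ := by
              noncomm_ring
          _ = P * (D * D') * P⁻¹ := by rw [Matrix.nonsing_inv_mul P hP, Matrix.mul_one]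
          _ = 1 := by rw [hDD', Matrix.mul_one, Matrix.mul_nonsing_inv P hP]
      have hcoeinv : (M : Matrix (Fin 2) (Fin 2) ℂ)
          * ((M⁻¹ : SL2C) : Matrix (Fin 2) (Fin 2) ℂ) = 1 := by
        rw [← Matrix.SpecialLinearGroup.coe_mul, mul_inv_cancel,
          Matrix.SpecialLinearGroup.coe_one]
      have hMinv : ((M⁻¹ : SL2C) : Matrix (Fin 2) (Fin 2) ℂ) = P * D' * P⁻¹ := by
        rw [← Matrix.inv_eq_right_inv hcoeinv, ← Matrix.inv_eq_right_inv hid]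
      have htrw' : ∀ k : ℕ, trSq (ρ (((FreeGroup.of 0)⁻¹) ^ k * FreeGroup.of 1))
          = ((l⁻¹) ^ k * C 0 0 + l ^ k * C 1 1) ^ 2 := by
        intro k
        have h1 : ρ (((FreeGroup.of 0)⁻¹) ^ k * FreeGroup.of 1)
            = projPSL ((M⁻¹) ^ k * N) := by
          rw [_root_.map_mul, _root_.map_pow, _root_.map_inv, ← hM, ← hN,
            ← _root_.map_inv projPSL, ← _root_.map_pow projPSL, ← _root_.map_mul projPSL]
        rw [h1, aux_trSq_projPSL, Matrix.SpecialLinearGroup.coe_mul,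
          Matrix.SpecialLinearGroup.coe_pow,
          aux_trace_formula _ _ P D' hP hMinv, hD'def, diag_pow, trace_diag_mul,
          ← hCdef]
      obtain ⟨n, hn⟩ := pow_unbounded_of_one_lt (2 / ‖C 1 1‖) hlgt
      have hbig : 2 < ‖(l⁻¹) ^ n * C 0 0 + l ^ n * C 1 1‖ := by
        rw [ha, mul_zero, zero_add, norm_mul, norm_pow]
        rw [div_lt_iff₀ hdpos] at hn
        linarith
      refine ⟨FreeGroup.of 0, ((FreeGroup.of 0)⁻¹) ^ n * FreeGroup.of 1,
        aux_gen_pair_shift_neg n, hA, ?_⟩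
      apply aux_lox_of_abs
      rw [htrw']
      exact aux_abs_sq hbig
    · -- degenerate case : elementary, contradiction
      push_neg at hd
      exfalso
      apply h
      have hNP : (N : Matrix (Fin 2) (Fin 2) ℂ) * P = P * C := by
        have h1 : P * C = (P * P⁻¹) * ((N : Matrix (Fin 2) (Fin 2) ℂ) * P) := by
          rw [hCdef]; noncomm_ring
        rw [h1, Matrix.mul_nonsing_inv P hP, Matrix.one_mul]
      have colv : P *ᵥ ![1, 0] = v := by
        rw [hPdef, colMat_mulVec]
        simp
      have colw : P *ᵥ ![0, 1] = w := by
        rw [hPdef, colMat_mulVec]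
        simp
      have hNv : (N : Matrix (Fin 2) (Fin 2) ℂ) *ᵥ v = C 1 0 • w := by
        have h1 : (N : Matrix (Fin 2) (Fin 2) ℂ) *ᵥ (P *ᵥ ![1, 0])
            = P *ᵥ (C *ᵥ ![1, 0]) := by
          rw [Matrix.mulVec_mulVec, Matrix.mulVec_mulVec, hNP]
        rw [colv] at h1
        have h2 : C *ᵥ ![1, 0] = ![C 0 0, C 1 0] := by
          funext i; fin_cases i <;> simp [Matrix.mulVec, dotProduct, Fin.sum_univ_two]
        rw [h2, hPdef, colMat_mulVec] at h1
        simpa [ha] using h1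
      have hNw : (N : Matrix (Fin 2) (Fin 2) ℂ) *ᵥ w = C 0 1 • v := by
        have h1 : (N : Matrix (Fin 2) (Fin 2) ℂ) *ᵥ (P *ᵥ ![0, 1])
            = P *ᵥ (C *ᵥ ![0, 1]) := by
          rw [Matrix.mulVec_mulVec, Matrix.mulVec_mulVec, hNP]
        rw [colw] at h1
        have h2 : C *ᵥ ![0, 1] = ![C 0 1, C 1 1] := by
          funext i; fin_cases i <;> simp [Matrix.mulVec, dotProduct, Fin.sum_univ_two]
        rw [h2, hPdef, colMat_mulVec] at h1
        simpa [hd] using h1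
      have hdetC : C.det = 1 := detC_eq_one P _ hP N.prop
      have hbc : -(C 0 1 * C 1 0) = 1 := by
        rw [Matrix.det_fin_two, ha, hd] at hdetC
        linear_combination hdetC
      have hcne : C 1 0 ≠ 0 := by
        intro hcon; rw [hcon, mul_zero] at hbc; norm_num at hbc
      have hbne : C 0 1 ≠ 0 := by
        intro hcon; rw [hcon, zero_mul] at hbc; norm_num at hbc
      set pv : P1 := Projectivization.mk ℂ v hv0ne with hpv
      set pw : P1 := Projectivization.mk ℂ w hw0ne with hpw
      have hpvw : pv ≠ pw := by
        intro heq
        obtain ⟨α, hα⟩ := (Projectivization.mk_eq_mk_iff' ℂ v w hv0ne hw0ne).mp heq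
        have hα0 : α ≠ 0 := by
          intro hcon; rw [hcon, zero_smul] at hα; exact hv0ne hα.symm
        have e1 : (M : Matrix (Fin 2) (Fin 2) ℂ) *ᵥ v = l • v := hv
        rw [← hα, Matrix.mulVec_smul, hw, smul_smul, smul_smul] at e1
        have h2 : ((α * l⁻¹) - (l * α)) • w = 0 := by rw [sub_smul, e1, sub_self]
        rcases smul_eq_zero.mp h2 with hc | hc
        · have e2 : (α * l⁻¹) - (l * α) = -(α * (l - l⁻¹)) := by ring
          rw [e2, neg_eq_zero] at hc
          rcases mul_eq_zero.mp hc with hc' | hc'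
          · exact hα0 hc'
          · exact hlml hc'
        · exact hw0ne hc
      have hactM_v : pslAct (ρ (FreeGroup.of 0)) pv = pv := by
        rw [← hM, hpv, aux_pslAct_projPSL]
        exact (Projectivization.mk_eq_mk_iff' ℂ _ _ _ _).mpr ⟨l, hv.symm⟩
      have hactM_w : pslAct (ρ (FreeGroup.of 0)) pw = pw := by
        rw [← hM, hpw, aux_pslAct_projPSL]
        exact (Projectivization.mk_eq_mk_iff' ℂ _ _ _ _).mpr ⟨l⁻¹, hw.symm⟩
      have hactN_v : pslAct (ρ (FreeGroup.of 1)) pv = pw := by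
        rw [← hN, hpv, hpw, aux_pslAct_projPSL]
        exact (Projectivization.mk_eq_mk_iff' ℂ _ _ _ _).mpr ⟨C 1 0, hNv.symm⟩
      have hactN_w : pslAct (ρ (FreeGroup.of 1)) pw = pv := by
        rw [← hN, hpv, hpw, aux_pslAct_projPSL]
        exact (Projectivization.mk_eq_mk_iff' ℂ _ _ _ _).mpr ⟨C 0 1, hNw.symm⟩
      apply aux_elementary_of_invariant ρ {pv, pw} ⟨pv, Set.mem_insert _ _⟩
        ((Set.finite_singleton pw).insert pv)
        (by rw [Set.ncard_pair hpvw])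
      intro i
      fin_cases i
      · rw [Set.image_pair]
        show ({pslAct (ρ (FreeGroup.of 0)) pv, pslAct (ρ (FreeGroup.of 0)) pw} : Set P1)
          = {pv, pw}
        rw [hactM_v, hactM_w]
      · rw [Set.image_pair]
        show ({pslAct (ρ (FreeGroup.of 1)) pv, pslAct (ρ (FreeGroup.of 1)) pw} : Set P1)
          = {pv, pw}
        rw [hactN_v, hactN_w, Set.pair_comm]

lemma aux_case_par (ρ : FreeGroup (Fin 2) →* PSL2C) (h : IsNonElem ρ)
    (hA : IsParabolic (ρ (FreeGroup.of 0))) :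
    ∃ x y : FreeGroup (Fin 2), Subgroup.closure {x, y} = (⊤ : Subgroup (FreeGroup (Fin 2))) ∧
      IsLoxodromic (ρ x) ∧ IsLoxodromic (ρ y) := by
  classical
  obtain ⟨N, hN⟩ := aux_projPSL_surj (ρ (FreeGroup.of 1))
  obtain ⟨M, hM, hMtr⟩ : ∃ M : SL2C, projPSL M = ρ (FreeGroup.of 0) ∧
      Matrix.trace (M : Matrix (Fin 2) (Fin 2) ℂ) = 2 := by
    obtain ⟨M0, hM0⟩ := aux_projPSL_surj (ρ (FreeGroup.of 0))
    have htr2 : (Matrix.trace ((M0 : SL2C) : Matrix (Fin 2) (Fin 2) ℂ)) ^ 2 = 4 := by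
      rw [← aux_trSq_projPSL, hM0]; exact hA.2
    have hfact : (Matrix.trace ((M0 : SL2C) : Matrix (Fin 2) (Fin 2) ℂ) - 2)
        * (Matrix.trace ((M0 : SL2C) : Matrix (Fin 2) (Fin 2) ℂ) + 2) = 0 := by
      linear_combination htr2
    rcases mul_eq_zero.mp hfact with hc | hc
    · exact ⟨M0, hM0, by linear_combination hc⟩
    · haveI : Fact (Even (Fintype.card (Fin 2))) := ⟨⟨1, by norm_num⟩⟩
      refine ⟨-M0, ?_, ?_⟩
      · have hmem : (-1 : SL2C) ∈ Subgroup.center SL2C := by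
          apply Subgroup.mem_center_iff.mpr
          intro g
          apply Subtype.ext
          push_cast
          simp [Matrix.mul_neg, Matrix.neg_mul]
        have hproj : projPSL (-1 : SL2C) = 1 := by
          have e : projPSL (-1 : SL2C) = projPSL (1 : SL2C) := by
            apply (QuotientGroup.mk'_eq_mk' (Subgroup.center SL2C)).mpr
            exact ⟨-1, hmem, by simp⟩
          rw [e, _root_.map_one]
        have e2 : (-M0 : SL2C) = M0 * (-1) := by rw [mul_neg_one]
        rw [e2, _root_.map_mul, hproj, mul_one, hM0]
      · rw [Matrix.SpecialLinearGroup.coe_neg, Matrix.trace_neg]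
        linear_combination -hc
  have hMne1 : ((M : SL2C) : Matrix (Fin 2) (Fin 2) ℂ) ≠ 1 := by
    intro h1
    apply hA.1
    rw [← hM]
    have e : M = 1 := Subtype.ext (by rw [h1]; rfl)
    rw [e, _root_.map_one]
  obtain ⟨u, hu⟩ : ∃ u : Fin 2 → ℂ, (M : Matrix (Fin 2) (Fin 2) ℂ) *ᵥ u ≠ u := by
    by_contra hcon
    push_neg at hcon
    apply hMne1
    have e : Matrix.toLin' ((M : SL2C) : Matrix (Fin 2) (Fin 2) ℂ)
        = Matrix.toLin' (1 : Matrix (Fin 2) (Fin 2) ℂ) := by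
      apply LinearMap.ext
      intro z
      rw [Matrix.toLin'_apply, Matrix.toLin'_apply, hcon, Matrix.one_mulVec]
    exact Matrix.toLin'.injective e
  have htrf : (M : Matrix (Fin 2) (Fin 2) ℂ) 0 0 + (M : Matrix (Fin 2) (Fin 2) ℂ) 1 1 = 2 := by
    rw [← Matrix.trace_fin_two]; exact hMtr
  have hdetf : (M : Matrix (Fin 2) (Fin 2) ℂ) 0 0 * (M : Matrix (Fin 2) (Fin 2) ℂ) 1 1
      - (M : Matrix (Fin 2) (Fin 2) ℂ) 0 1 * (M : Matrix (Fin 2) (Fin 2) ℂ) 1 0 = 1 := by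
    rw [← Matrix.det_fin_two]; exact M.prop
  have hM2 : (M : Matrix (Fin 2) (Fin 2) ℂ) * (M : Matrix (Fin 2) (Fin 2) ℂ)
      = (2 : ℂ) • (M : Matrix (Fin 2) (Fin 2) ℂ) - 1 := by
    ext i j
    fin_cases i <;> fin_cases j <;>
      simp only [Matrix.mul_apply, Fin.sum_univ_two, Matrix.smul_apply, Matrix.sub_apply,
        Matrix.one_apply, smul_eq_mul, Fin.isValue, Fin.zero_eta, Fin.mk_one,
        if_true, if_false, one_ne_zero, zero_ne_one, reduceIte]
    · linear_combination (M : Matrix (Fin 2) (Fin 2) ℂ) 0 0 * htrf - hdetf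
    · linear_combination (M : Matrix (Fin 2) (Fin 2) ℂ) 0 1 * htrf
    · linear_combination (M : Matrix (Fin 2) (Fin 2) ℂ) 1 0 * htrf
    · linear_combination (M : Matrix (Fin 2) (Fin 2) ℂ) 1 1 * htrf - hdetf
  set v : Fin 2 → ℂ := (M : Matrix (Fin 2) (Fin 2) ℂ) *ᵥ u - u with hvdef
  have hv0 : v ≠ 0 := sub_ne_zero.mpr hu
  have hsq : (M : Matrix (Fin 2) (Fin 2) ℂ) *ᵥ ((M : Matrix (Fin 2) (Fin 2) ℂ) *ᵥ u)
      = (2 : ℂ) • ((M : Matrix (Fin 2) (Fin 2) ℂ) *ᵥ u) - u := by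
    rw [Matrix.mulVec_mulVec, hM2, Matrix.sub_mulVec, Matrix.smul_mulVec,
      Matrix.one_mulVec]
  have hvfix : (M : Matrix (Fin 2) (Fin 2) ℂ) *ᵥ v = v := by
    rw [hvdef, Matrix.mulVec_sub, hsq]
    module
  have hMu : (M : Matrix (Fin 2) (Fin 2) ℂ) *ᵥ u = u + v := by
    rw [hvdef]
    module
  have hind : ∀ x : Fin 2 → ℂ, x 0 • v + x 1 • u = 0 → x = 0 := by
    intro x hx
    have h1 : x 0 • v + x 1 • (u + v) = 0 := by
      have h2 := congrArg (fun z => (M : Matrix (Fin 2) (Fin 2) ℂ) *ᵥ z) hx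
      simpa [Matrix.mulVec_add, Matrix.mulVec_smul, hvfix, hMu] using h2
    have h3 : x 1 • v = 0 := by
      have hc : x 1 • v = (x 0 • v + x 1 • (u + v)) - (x 0 • v + x 1 • u) := by module
      rw [h1, hx, sub_zero] at hc
      exact hc
    have hx1 : x 1 = 0 := by
      rcases smul_eq_zero.mp h3 with hc | hc
      · exact hc
      · exact absurd hc hv0
    have hx0 : x 0 = 0 := by
      rw [hx1, zero_smul, add_zero] at hx
      rcases smul_eq_zero.mp hx with hc | hc
      · exact hc
      · exact absurd hc hv0
    funext i
    fin_cases i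
    · simpa using hx0
    · simpa using hx1
  set P : Matrix (Fin 2) (Fin 2) ℂ := colMat v u with hPdef
  have hP : IsUnit P.det := colMat_det_ne_zero hind
  have hMP : (M : Matrix (Fin 2) (Fin 2) ℂ) = P * !![1, 1; 0, 1] * P⁻¹ := by
    have h1 : (M : Matrix (Fin 2) (Fin 2) ℂ) * P = P * !![1, 1; 0, 1] := by
      rw [hPdef, mul_colMat, hvfix, hMu, add_comm u v, colMat_mul_J]
    calc (M : Matrix (Fin 2) (Fin 2) ℂ)
        = (M : Matrix (Fin 2) (Fin 2) ℂ) * P * P⁻¹ := by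
          rw [Matrix.mul_assoc, Matrix.mul_nonsing_inv P hP, Matrix.mul_one]
      _ = P * !![1, 1; 0, 1] * P⁻¹ := by rw [h1]
  set C : Matrix (Fin 2) (Fin 2) ℂ := P⁻¹ * (N : Matrix (Fin 2) (Fin 2) ℂ) * P with hCdef
  have htrw : ∀ k : ℕ, trSq (ρ ((FreeGroup.of 0) ^ k * FreeGroup.of 1))
      = (C 0 0 + (k : ℂ) * C 1 0 + C 1 1) ^ 2 := by
    intro k
    have h1 : ρ ((FreeGroup.of 0) ^ k * FreeGroup.of 1) = projPSL (M ^ k * N) := by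
      rw [_root_.map_mul, _root_.map_pow, ← hM, ← hN, ← _root_.map_pow projPSL,
        ← _root_.map_mul projPSL]
    rw [h1, aux_trSq_projPSL, Matrix.SpecialLinearGroup.coe_mul,
      Matrix.SpecialLinearGroup.coe_pow,
      aux_trace_formula _ _ P !![1, 1; 0, 1] hP hMP, J_pow, trace_J_mul, ← hCdef]
  by_cases hc : C 1 0 ≠ 0
  · have hcpos : 0 < ‖C 1 0‖ := norm_pos_iff.mpr hc
    obtain ⟨n0, hn0⟩ := exists_nat_gt ((2 + ‖C 0 0 + C 1 1‖) / ‖C 1 0‖)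
    have key : ∀ k : ℕ, n0 ≤ k → 2 < ‖C 0 0 + (k : ℂ) * C 1 0 + C 1 1‖ := by
      intro k hk
      have e : C 0 0 + (k : ℂ) * C 1 0 + C 1 1 = (k : ℂ) * C 1 0 + (C 0 0 + C 1 1) := by ring
      rw [e]
      have h2 : ‖(k : ℂ) * C 1 0‖ = (k : ℝ) * ‖C 1 0‖ := by
        rw [norm_mul, Complex.norm_natCast]
      have h3 : 2 + ‖C 0 0 + C 1 1‖ < (n0 : ℝ) * ‖C 1 0‖ := by
        rw [div_lt_iff₀ hcpos] at hn0
        linarith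
      have h4 : (n0 : ℝ) * ‖C 1 0‖ ≤ (k : ℝ) * ‖C 1 0‖ :=
        mul_le_mul_of_nonneg_right (Nat.cast_le.mpr hk) (le_of_lt hcpos)
      linarith [aux_abs_lower ((k : ℂ) * C 1 0) (C 0 0 + C 1 1)]
    refine ⟨(FreeGroup.of 0) ^ (n0 + 1) * FreeGroup.of 1,
      (FreeGroup.of 0) ^ n0 * FreeGroup.of 1, aux_gen_pair_succ n0, ?_, ?_⟩
    · apply aux_lox_of_abs
      rw [htrw]
      exact aux_abs_sq (key (n0 + 1) (Nat.le_succ n0))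
    · apply aux_lox_of_abs
      rw [htrw]
      exact aux_abs_sq (key n0 le_rfl)
  · push_neg at hc
    exfalso
    apply h
    have hNP : (N : Matrix (Fin 2) (Fin 2) ℂ) * P = P * C := by
      have h1 : P * C = (P * P⁻¹) * ((N : Matrix (Fin 2) (Fin 2) ℂ) * P) := by
        rw [hCdef]; noncomm_ring
      rw [h1, Matrix.mul_nonsing_inv P hP, Matrix.one_mul]
    have colv : P *ᵥ ![1, 0] = v := by
      rw [hPdef, colMat_mulVec]
      simp
    have hNv : (N : Matrix (Fin 2) (Fin 2) ℂ) *ᵥ v = C 0 0 • v := by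
      have h1 : (N : Matrix (Fin 2) (Fin 2) ℂ) *ᵥ (P *ᵥ ![1, 0])
          = P *ᵥ (C *ᵥ ![1, 0]) := by
        rw [Matrix.mulVec_mulVec, Matrix.mulVec_mulVec, hNP]
      rw [colv] at h1
      have h2 : C *ᵥ ![1, 0] = ![C 0 0, C 1 0] := by
        funext i; fin_cases i <;> simp [Matrix.mulVec, dotProduct, Fin.sum_univ_two]
      rw [h2, hPdef, colMat_mulVec] at h1
      simpa [hc] using h1
    have hC00 : C 0 0 ≠ 0 := by
      have hdetC : C.det = 1 := detC_eq_one P _ hP N.prop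
      rw [Matrix.det_fin_two, hc, mul_zero, sub_zero] at hdetC
      exact left_ne_zero_of_mul_eq_one hdetC
    set pv : P1 := Projectivization.mk ℂ v hv0 with hpv
    have hactM : pslAct (ρ (FreeGroup.of 0)) pv = pv := by
      rw [← hM, hpv, aux_pslAct_projPSL]
      exact (Projectivization.mk_eq_mk_iff' ℂ _ _ _ _).mpr ⟨1, by rw [one_smul, hvfix]⟩
    have hactN : pslAct (ρ (FreeGroup.of 1)) pv = pv := by
      rw [← hN, hpv, aux_pslAct_projPSL]
      exact (Projectivization.mk_eq_mk_iff' ℂ _ _ _ _).mpr ⟨C 0 0, hNv.symm⟩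
    apply aux_elementary_of_invariant ρ {pv} ⟨pv, rfl⟩ (Set.finite_singleton pv)
      (by simp)
    intro i
    fin_cases i
    · rw [Set.image_singleton]
      show ({pslAct (ρ (FreeGroup.of 0)) pv} : Set P1) = {pv}
      rw [hactM]
    · rw [Set.image_singleton]
      show ({pslAct (ρ (FreeGroup.of 1)) pv} : Set P1) = {pv}
      rw [hactN]

end Statement11Main

/-- if some primitive element has loxodromic or parabolic image, then there is a
generating pair with loxodromic images. -/
theorem statement11 (ρ : FreeGroup (Fin 2) →* PSL2C) (h : IsNonElem ρ)
    (hγ : ∃ γ : FreeGroup (Fin 2), IsPrimitiveF2 γ ∧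
      (IsLoxodromic (ρ γ) ∨ IsParabolic (ρ γ))) :
    ∃ x y : FreeGroup (Fin 2), Subgroup.closure {x, y} = (⊤ : Subgroup (FreeGroup (Fin 2))) ∧
      IsLoxodromic (ρ x) ∧ IsLoxodromic (ρ y) := by
  obtain ⟨γ, ⟨φ, hφ⟩, hlp⟩ := hγ
  set ρ' : FreeGroup (Fin 2) →* PSL2C := ρ.comp φ.toMonoidHom with hρ'
  have hrange : ρ'.range = ρ.range := by
    ext g
    constructor
    · rintro ⟨α, rfl⟩
      exact ⟨φ α, rfl⟩
    · rintro ⟨α, rfl⟩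
      exact ⟨φ.symm α, by simp [hρ']⟩
  have h' : IsNonElem ρ' := by
    rw [IsNonElem, hrange]
    exact h
  have heval : ρ' (FreeGroup.of 0) = ρ γ := by
    rw [hρ']
    simp [hφ]
  have hl' : IsLoxodromic (ρ' (FreeGroup.of 0)) ∨ IsParabolic (ρ' (FreeGroup.of 0)) := by
    rw [heval]; exact hlp
  have key : ∃ x y : FreeGroup (Fin 2),
      Subgroup.closure {x, y} = (⊤ : Subgroup (FreeGroup (Fin 2))) ∧
      IsLoxodromic (ρ' x) ∧ IsLoxodromic (ρ' y) := by
    rcases hl' with h1 | h2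
    · exact aux_case_lox ρ' h' h1
    · exact aux_case_par ρ' h' h2
  obtain ⟨x, y, hxy, hx, hy⟩ := key
  refine ⟨φ x, φ y, ?_, hx, hy⟩
  have hmap : Subgroup.map φ.toMonoidHom (Subgroup.closure {x, y})
      = Subgroup.closure {φ x, φ y} := by
    rw [MonoidHom.map_closure, Set.image_pair]
    rfl
  rw [← hmap, hxy]
  exact Subgroup.map_top_of_surjective _ φ.surjective
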